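/- arXiv:2007.10740 — 2 statements merged into one kernel-verified Lean document; each statement's English description precedes it below -/
import Mathlib

section
/- Let k ≥ 2, n : Fin k → ℝ with n_i > 0, fix y : Fin k, and let η : ℕ → (Fin k → ℝ) with φ̂_y(η_m) → 1 (balanced softmax of true class tends to 1). Let φ denote standard softmax. Then φ̂_y(η_m)/φ_y(η_m) → 1 as m → ∞. -/
open Real Finset Filter

theorem positive_sample_ratio_limit (k : ℕ) (hk : 2 ≤ k)
    (n : Fin k → ℝ) (hn : ∀ i, 0 < n i) (y : Fin k)
    (η : ℕ → (Fin k → ℝ))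
    (hconv : Tendsto (fun m => n y * Real.exp (η m y) / ∑ i, n i * Real.exp (η m i))
      atTop (nhds 1)) :
    Tendsto (fun m =>
        (n y * Real.exp (η m y) / ∑ i, n i * Real.exp (η m i)) /
        (Real.exp (η m y) / ∑ i, Real.exp (η m i)))
      atTop (nhds 1) := by
  set S : ℕ → ℝ := fun m => ∑ i, n i * Real.exp (η m i) with hSdef
  have hSpos : ∀ m, 0 < S m := fun m =>
    Finset.sum_pos (fun i _ => mul_pos (hn i) (Real.exp_pos _)) ⟨y, Finset.mem_univ y⟩
  have hS1pos : ∀ m, 0 < ∑ i, Real.exp (η m i) := fun m =>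
    Finset.sum_pos (fun i _ => Real.exp_pos _) ⟨y, Finset.mem_univ y⟩
  have hsum1 : ∀ m, ∑ i, n i * Real.exp (η m i) / S m = 1 := fun m => by
    rw [← Finset.sum_div, div_self (hSpos m).ne']
  -- each off-class balanced softmax tends to 0
  have hzero : ∀ i, i ≠ y →
      Tendsto (fun m => n i * Real.exp (η m i) / S m) atTop (nhds 0) := by
    intro i hi
    have hub : Tendsto (fun m => 1 - n y * Real.exp (η m y) / S m) atTop (nhds 0) := by
      have := hconv.const_sub 1
      simpa using this
    refine squeeze_zero (fun m => div_nonneg (mul_nonneg (hn _).le (Real.exp_pos _).le) (hSpos m).le)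
      (fun m => ?_) hub
    have h1 : ∑ j ∈ ({i, y} : Finset (Fin k)), n j * Real.exp (η m j) / S m ≤ 1 := by
      rw [← hsum1 m]
      exact Finset.sum_le_sum_of_subset_of_nonneg (Finset.subset_univ _)
        (fun j _ _ => div_nonneg (mul_nonneg (hn _).le (Real.exp_pos _).le) (hSpos m).le)
    rw [Finset.sum_pair hi] at h1
    linarith
  -- the main sum representation
  have hmain : Tendsto (fun m => ∑ i, (n y / n i) * (n i * Real.exp (η m i) / S m))
      atTop (nhds 1) := by
    have hlim : (1 : ℝ) = ∑ i : Fin k, (if i = y then (1 : ℝ) else 0) := by simp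
    rw [hlim]
    apply tendsto_finset_sum
    intro i _
    by_cases hiy : i = y
    · subst hiy
      simp only [if_pos rfl]
      have : Tendsto (fun m => (n i / n i) * (n i * Real.exp (η m i) / S m))
          atTop (nhds ((n i / n i) * 1)) := (hconv.const_mul _)
      simpa [div_self (hn i).ne'] using this
    · simp only [if_neg hiy]
      simpa using (hzero i hiy).const_mul (n y / n i)
  -- pointwise equality
  have heq : ∀ m, (n y * Real.exp (η m y) / S m) /
      (Real.exp (η m y) / ∑ i, Real.exp (η m i)) =
      ∑ i, (n y / n i) * (n i * Real.exp (η m i) / S m) := by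
    intro m
    have h1 : ∀ i ∈ Finset.univ, (n y / n i) * (n i * Real.exp (η m i) / S m) =
        n y * Real.exp (η m i) / S m := fun i _ => by
      field_simp [(hn i).ne', (hSpos m).ne']
    rw [Finset.sum_congr rfl h1, ← Finset.sum_div, ← Finset.mul_sum]
    rw [div_div_div_eq, mul_comm (n y) (Real.exp (η m y)), mul_assoc,
      mul_comm (S m) (Real.exp (η m y)),
      mul_div_mul_left _ _ (Real.exp_pos _).ne']
  exact hmain.congr (fun m => (heq m).symm)
end

section
/- Let k ≥ 2, n : Fin k → ℝ with n_i > 0, fix y j : Fin k with j ≠ y, and let η : ℕ → (Fin k → ℝ) with φ̂_y(η_m) → 1. Assume additionally that φ_j(η_m)/φ_j(η_m) ratios are well-defined (all quantities positive, automatic). Then limsup and liminf of φ̂_j(η_m)/φ_j(η_m) both equal n_j/n_y, i.e., φ̂_j(η_m)/φ_j(η_m) → n_j/n_y as m → ∞. -/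
open Real Finset Filter

theorem negative_sample_ratio_limit (k : ℕ) (hk : 2 ≤ k)
    (n : Fin k → ℝ) (hn : ∀ i, 0 < n i) (y j : Fin k) (hjy : j ≠ y)
    (η : ℕ → (Fin k → ℝ))
    (hconv : Tendsto (fun m => n y * Real.exp (η m y) / ∑ i, n i * Real.exp (η m i))
      atTop (nhds 1)) :
    Tendsto (fun m =>
        (n j * Real.exp (η m j) / ∑ i, n i * Real.exp (η m i)) /
        (Real.exp (η m j) / ∑ i, Real.exp (η m i)))
      atTop (nhds (n j / n y)) := by
  set Sn : ℕ → ℝ := fun m => ∑ i, n i * Real.exp (η m i) with hSndef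
  have hSnpos : ∀ m, 0 < Sn m := fun m =>
    Finset.sum_pos (fun i _ => mul_pos (hn i) (Real.exp_pos _)) ⟨y, Finset.mem_univ y⟩
  have hterm : ∀ i, Tendsto (fun m => n i * Real.exp (η m i) / Sn m) atTop
      (nhds (if i = y then 1 else 0)) := by
    intro i
    by_cases hi : i = y
    · simpa [hi] using hconv
    · simp only [hi, if_false]
      have h0 : ∀ m, (0:ℝ) ≤ n i * Real.exp (η m i) / Sn m := fun m =>
        div_nonneg (mul_pos (hn i) (Real.exp_pos _)).le (hSnpos m).le
      have hle : ∀ m, n i * Real.exp (η m i) / Sn m ≤ 1 - n y * Real.exp (η m y) / Sn m := by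
        intro m
        have hsum : ∑ i', n i' * Real.exp (η m i') / Sn m = 1 := by
          rw [← Finset.sum_div, div_self (hSnpos m).ne']
        have hsub : ∑ i' ∈ ({i, y} : Finset (Fin k)), n i' * Real.exp (η m i') / Sn m
            ≤ ∑ i', n i' * Real.exp (η m i') / Sn m := by
          apply Finset.sum_le_sum_of_subset_of_nonneg (Finset.subset_univ _)
          intro i' _ _
          exact div_nonneg (mul_pos (hn i') (Real.exp_pos _)).le (hSnpos m).le
        rw [Finset.sum_pair hi] at hsub
        rw [hsum] at hsub
        linarith
      have hupper : Tendsto (fun m => 1 - n y * Real.exp (η m y) / Sn m) atTop (nhds 0) := by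
        have := hconv.const_sub 1
        simpa using this
      exact squeeze_zero h0 hle hupper
  have hexp : ∀ i, Tendsto (fun m => Real.exp (η m i) / Sn m) atTop
      (nhds (if i = y then 1 / n y else 0)) := by
    intro i
    have h := (hterm i).div_const (n i)
    have heq : (fun m => n i * Real.exp (η m i) / Sn m / n i)
        = fun m => Real.exp (η m i) / Sn m := by
      funext m
      rw [mul_div_assoc, mul_div_cancel_left₀ _ (hn i).ne']
    rw [heq] at h
    by_cases hi : i = y
    · subst hi; simpa using h
    · simpa [hi] using h
  have hS : Tendsto (fun m => ∑ i, Real.exp (η m i) / Sn m) atTop (nhds (1 / n y)) := by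
    have := tendsto_finset_sum Finset.univ (fun i _ => hexp i)
    simpa using this
  have hmul : Tendsto (fun m => n j * ∑ i, Real.exp (η m i) / Sn m) atTop
      (nhds (n j / n y)) := by
    have := hS.const_mul (n j)
    simpa [mul_one_div, div_eq_mul_inv] using this
  refine hmul.congr ?_
  intro m
  rw [← Finset.sum_div]
  have hS0 : (0:ℝ) < ∑ i, Real.exp (η m i) :=
    Finset.sum_pos (fun i _ => Real.exp_pos _) ⟨y, Finset.mem_univ y⟩
  have hSn0 := hSnpos m
  have he := Real.exp_pos (η m j)
  field_simp
  have hSn1 : Sn m / (∑ x, n x * Real.exp (η m x)) = 1 := div_self hSn0.ne'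
  rw [mul_div_assoc, hSn1, mul_one]
end
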